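/- If w* satisfies wᵢ* = clip(zᵢ - τ*, ℓ, u) for all i and Σᵢ wᵢ* = 1, then w* is the Euclidean projection of z onto the set {w ∈ ℝ^N : Σᵢ wᵢ = 1, ℓ ≤ wᵢ ≤ u}. -/
import Mathlib

lemma clip_var_ineq (l u a b : ℝ) (hla : l ≤ a) (hau : a ≤ u) :
    0 ≤ (a - max l (min b u)) * (max l (min b u) - b) := by
  rcases le_total b l with h | h
  · have h1 : min b u ≤ l := le_trans (min_le_left _ _) h
    rw [max_eq_left h1]
    have h2 : min b u ≤ b := min_le_left _ _
    nlinarith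
  rcases le_total u b with h2 | h2
  · rw [min_eq_right h2, max_eq_right (le_trans hla hau)]
    nlinarith
  · rw [min_eq_left h2, max_eq_right h]
    nlinarith

/-- If `w*ᵢ = clip(zᵢ - τ*, ℓ, u)` and `Σᵢ w*ᵢ = 1`, then `w*` is the Euclidean
projection of `z` onto the box-constrained simplex. -/
theorem casp_clip_is_euclidean_projection (N : ℕ) (z : Fin N → ℝ) (l u : ℝ) (hlu : l ≤ u)
    (τstar : ℝ) (wstar : Fin N → ℝ)
    (hw : ∀ i, wstar i = max l (min (z i - τstar) u))
    (hsum : (∑ i, wstar i) = 1) :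
    wstar ∈ {w : Fin N → ℝ | (∑ i, w i) = 1 ∧ ∀ i, l ≤ w i ∧ w i ≤ u} ∧
    ∀ w ∈ {w : Fin N → ℝ | (∑ i, w i) = 1 ∧ ∀ i, l ≤ w i ∧ w i ≤ u},
      (∑ i, (wstar i - z i) ^ 2) ≤ ∑ i, (w i - z i) ^ 2 := by
  constructor
  · refine ⟨hsum, fun i => ?_⟩
    rw [hw i]
    exact ⟨le_max_left _ _, max_le hlu (min_le_right _ _)⟩
  · rintro w ⟨hw1, hwb⟩
    have hS : 0 ≤ ∑ i, (w i - wstar i) * (wstar i - (z i - τstar)) := by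
      apply Finset.sum_nonneg
      intro i _
      rw [hw i]
      exact clip_var_ineq l u (w i) (z i - τstar) (hwb i).1 (hwb i).2
    have hzero : ∑ i, (w i - wstar i) = 0 := by
      rw [Finset.sum_sub_distrib, hw1, hsum]; ring
    have hsq : 0 ≤ ∑ i, (w i - wstar i) ^ 2 :=
      Finset.sum_nonneg fun i _ => sq_nonneg _
    have hdecomp : ∑ i, (w i - z i) ^ 2 =
        (∑ i, (wstar i - z i) ^ 2) + (∑ i, (w i - wstar i) ^ 2)
        + 2 * (∑ i, (w i - wstar i) * (wstar i - (z i - τstar)))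
        - 2 * τstar * (∑ i, (w i - wstar i)) := by
      simp only [Finset.mul_sum, ← Finset.sum_add_distrib, ← Finset.sum_sub_distrib]
      apply Finset.sum_congr rfl
      intros; ring
    rw [hdecomp, hzero]
    nlinarith
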